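/- Let a, b, c, d, e, f, g, h ∈ ℚ with a ≠ 0, and let r, s ∈ ℚ with r ≠ 0. Set p = (-d + r^2)/a, q = -(-d^3 + a^3e + 3d^2r^2 - 3dr^4 + r^6 - 2a^3rs)/a^4, u = -(-f - bp - 3p^2q + s^2)/(2r). Then the polynomial (rT^2 + sT + u)^2 - ((pT + q)^3 + (aT^3 + bT + c)(pT + q) + (dT^4 + eT^3 + fT^2 + gT + h)) in T has degree at most 1. -/

import Mathlib

open Polynomial

theorem stmt_17 (a b c d e f g h r s : ℚ) (ha : a ≠ 0) (hr : r ≠ 0)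
    (p q u : ℚ)
    (hp : p = (-d + r^2)/a)
    (hq : q = -(-d^3 + a^3*e + 3*d^2*r^2 - 3*d*r^4 + r^6 - 2*a^3*r*s)/a^4)
    (hu : u = -(-f - b*p - 3*p^2*q + s^2)/(2*r)) :
    ((C r * X^2 + C s * X + C u)^2
      - ((C p * X + C q)^3 + (C a * X^3 + C b * X + C c) * (C p * X + C q)
          + (C d * X^4 + C e * X^3 + C f * X^2 + C g * X + C h)) : ℚ[X]).degree ≤ 1 := by
  have h4 : r^2 = a*p + d := by rw [hp]; field_simp; ring
  have h3 : 2*r*s = p^3 + a*q + e := by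
    rw [hp, hq]; field_simp; ring
  have h2 : s^2 + 2*r*u = 3*p^2*q + b*p + f := by
    rw [hu]; field_simp; ring
  have key : ((C r * X^2 + C s * X + C u)^2
      - ((C p * X + C q)^3 + (C a * X^3 + C b * X + C c) * (C p * X + C q)
          + (C d * X^4 + C e * X^3 + C f * X^2 + C g * X + C h)) : ℚ[X])
      = C (2*s*u - 3*p*q^2 - b*q - c*p - g) * X + C (u^2 - q^3 - c*q - h) := by
    apply Polynomial.funext
    intro x
    simp only [eval_add, eval_sub, eval_mul, eval_pow, eval_C, eval_X]
    linear_combination (x:ℚ)^4 * h4 + (x:ℚ)^3 * h3 + (x:ℚ)^2 * h2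
  rw [key]
  exact degree_linear_le
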